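/- A map f : ℂ → ℂ is continuous and limit periodic with respect to x if and only if there exists a sequence (f_n)_{n≥1} of continuous maps ℂ → ℂ with f_n(z + 2πn) = f_n(z) for all z, such that (f_n) converges to f uniformly on every horizontal band {z ∈ ℂ : Im(z) ∈ K} (K ⊂ ℝ compact) along the divisibility net; moreover, the sequence (f_n) can be chosen to be equicontinuous. -/

import Mathlib

open Complex Real Filter MeasureTheory

noncomputable section

/-- The profinite completion of `ℤ`: the inverse limit of the groups `ZMod n`
over the divisibility order. -/
def Zhat : Type :=
  {a : (n : ℕ+) → ZMod n //
    ∀ (n k : ℕ+), ZMod.castHom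
        (show ((n : ℕ+) : ℕ) ∣ ((n * k : ℕ+) : ℕ) by
          rw [PNat.mul_coe]; exact dvd_mul_right _ _)
        (ZMod n) (a (n * k)) = a n}

instance (n : ℕ) : TopologicalSpace (ZMod n) := ⊥

instance : TopologicalSpace Zhat := by unfold Zhat; infer_instance

instance : MeasurableSpace Zhat := borel _

instance : Zero Zhat := ⟨⟨fun _ => 0, fun _ _ => map_zero _⟩⟩

instance : Add Zhat :=
  ⟨fun a b => ⟨fun n => a.1 n + b.1 n, fun n k => by rw [map_add, a.2 n k, b.2 n k]⟩⟩

/-- The canonical inclusion `ℤ → ẑ`. -/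
def iotaZ (k : ℤ) : Zhat := ⟨fun n => (k : ZMod n), fun n m => by rw [map_intCast]⟩

/-- Multiplication by a natural number on `ẑ`. -/
def nsmulZ (c : ℕ) (a : Zhat) : Zhat :=
  ⟨fun n => (c : ZMod n) * a.1 n, fun n k => by rw [map_mul, map_natCast, a.2 n k]⟩

lemma exp_real_mul_I_norm (θ : ℝ) : ‖Complex.exp ((θ : ℂ) * Complex.I)‖ = 1 := by
  exact Complex.norm_exp_ofReal_mul_I θ

lemma exp_div_pow (θ : ℝ) (n k : ℕ+) :
    Complex.exp (((θ / (((n * k : ℕ+) : ℕ)) : ℝ) : ℂ) * Complex.I) ^ ((k : ℕ+) : ℕ)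
      = Complex.exp (((θ / ((n : ℕ+) : ℕ) : ℝ) : ℂ) * Complex.I) := by
  rw [← Complex.exp_nat_mul]
  congr 1
  have hn : (((n : ℕ+) : ℕ) : ℂ) ≠ 0 := by exact_mod_cast n.ne_zero
  have hk : (((k : ℕ+) : ℕ) : ℂ) ≠ 0 := by exact_mod_cast k.ne_zero
  rw [PNat.mul_coe]
  push_cast
  field_simp

lemma exp_div_powC (w : ℂ) (n k : ℕ+) :
    Complex.exp (w / (((n * k : ℕ+) : ℕ) : ℂ)) ^ ((k : ℕ+) : ℕ)
      = Complex.exp (w / (((n : ℕ+) : ℕ) : ℂ)) := by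
  rw [← Complex.exp_nat_mul]
  congr 1
  have hn : (((n : ℕ+) : ℕ) : ℂ) ≠ 0 := by exact_mod_cast n.ne_zero
  have hk : (((k : ℕ+) : ℕ) : ℂ) ≠ 0 := by exact_mod_cast k.ne_zero
  rw [PNat.mul_coe]
  push_cast
  field_simp

lemma exp_natCast_congr (n : ℕ+) (A B : ℕ)
    (h : (A : ZMod ((n : ℕ+) : ℕ)) = (B : ZMod ((n : ℕ+) : ℕ))) :
    Complex.exp (((2 * π * A / ((n : ℕ+) : ℕ) : ℝ) : ℂ) * Complex.I)
      = Complex.exp (((2 * π * B / ((n : ℕ+) : ℕ) : ℝ) : ℂ) * Complex.I) := by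
  rw [ZMod.natCast_eq_natCast_iff] at h
  obtain ⟨j, hj⟩ := Nat.modEq_iff_dvd.mp h
  have hn : ((((n : ℕ+) : ℕ) : ℝ)) ≠ 0 := by exact_mod_cast n.ne_zero
  have hB : (B : ℝ) = (A : ℝ) + (((n : ℕ+) : ℕ) : ℝ) * (j : ℝ) := by
    have : (B : ℤ) = (A : ℤ) + (((n : ℕ+) : ℕ) : ℤ) * j := by linarith [hj]
    exact_mod_cast congrArg (fun t : ℤ => (t : ℝ)) this
  have key : ((2 * π * B / ((n : ℕ+) : ℕ) : ℝ) : ℂ) * Complex.I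
      = ((2 * π * A / ((n : ℕ+) : ℕ) : ℝ) : ℂ) * Complex.I + (j : ℂ) * (2 * (π : ℂ) * Complex.I) := by
    have hnC : ((((n : ℕ+) : ℕ) : ℂ)) ≠ 0 := by exact_mod_cast n.ne_zero
    push_cast [hB]
    field_simp
  rw [key, Complex.exp_add, Complex.exp_int_mul_two_pi_mul_I, mul_one]

/-- The component at level `n` of the canonical map `ẑ → S¹_ℚ`,
`l ↦ e^{2πil/n}`. -/
def phiComp (a : Zhat) (n : ℕ+) : ℂ :=
  Complex.exp (((2 * π * ((a.1 n).val : ℕ) / ((n : ℕ+) : ℕ) : ℝ) : ℂ) * Complex.I)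

lemma phiComp_pow (a : Zhat) (n k : ℕ+) : phiComp a (n * k) ^ ((k : ℕ+) : ℕ) = phiComp a n := by
  unfold phiComp
  rw [exp_div_pow]
  haveI : NeZero (((n * k : ℕ+) : ℕ)) := ⟨(n * k).ne_zero⟩
  haveI : NeZero (((n : ℕ+) : ℕ)) := ⟨n.ne_zero⟩
  apply exp_natCast_congr
  have h := a.2 n k
  rw [ZMod.castHom_apply] at h
  rw [ZMod.natCast_val, ZMod.natCast_val, ZMod.cast_id, h]

/-- The adelic solenoid `S¹_ℚ`: the inverse limit of the circles
`S¹ = {z ∈ ℂ : ‖z‖ = 1}` under the covering maps `z ↦ z^{m/n}` for `n ∣ m`. -/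
def SolQ : Type :=
  {z : ℕ+ → ℂ // (∀ n, ‖z n‖ = 1) ∧ ∀ (n k : ℕ+), z (n * k) ^ ((k : ℕ+) : ℕ) = z n}

instance : TopologicalSpace SolQ := by unfold SolQ; infer_instance
instance : MeasurableSpace SolQ := borel _

instance : Mul SolQ :=
  ⟨fun x y => ⟨fun n => x.1 n * y.1 n,
    ⟨fun n => by rw [norm_mul, x.2.1 n, y.2.1 n, one_mul],
     fun n k => by rw [mul_pow, x.2.2 n k, y.2.2 n k]⟩⟩⟩

instance : One SolQ := ⟨⟨fun _ => 1, ⟨fun _ => norm_one, fun _ _ => one_pow _⟩⟩⟩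

/-- The canonical homomorphism `φ : ẑ → S¹_ℚ`, induced componentwise by
`l ↦ e^{2πil/n}`. -/
def phiS (a : Zhat) : SolQ :=
  ⟨fun n => phiComp a n, ⟨fun n => exp_real_mul_I_norm _, phiComp_pow a⟩⟩

/-- The baseleaf `ν : ℝ → S¹_ℚ`, `ν(t) = (e^{it/n})ₙ`. -/
def nuS (t : ℝ) : SolQ :=
  ⟨fun n => Complex.exp (((t / ((n : ℕ+) : ℕ) : ℝ) : ℂ) * Complex.I),
   ⟨fun n => exp_real_mul_I_norm _, fun n k => exp_div_pow t n k⟩⟩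

/-- `exp : ẑ × ℝ → S¹_ℚ`, `exp(a, θ) = φ(a)·ν(θ)`. -/
def expS (p : Zhat × ℝ) : SolQ := phiS p.1 * nuS p.2

/-- The algebraic solenoid `ℂ*_ℚ`: the inverse limit of copies of `ℂ* = ℂ \ {0}`
under the covering maps `z ↦ z^{m/n}` for `n ∣ m`. -/
def CSolQ : Type :=
  {z : ℕ+ → ℂ // (∀ n, z n ≠ 0) ∧ ∀ (n k : ℕ+), z (n * k) ^ ((k : ℕ+) : ℕ) = z n}

instance : TopologicalSpace CSolQ := by unfold CSolQ; infer_instance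
instance : MeasurableSpace CSolQ := borel _

instance : Mul CSolQ :=
  ⟨fun x y => ⟨fun n => x.1 n * y.1 n,
    ⟨fun n => mul_ne_zero (x.2.1 n) (y.2.1 n),
     fun n k => by rw [mul_pow, x.2.2 n k, y.2.2 n k]⟩⟩⟩

instance : One CSolQ := ⟨⟨fun _ => 1, ⟨fun _ => one_ne_zero, fun _ _ => one_pow _⟩⟩⟩

/-- The canonical homomorphism `φ : ẑ → ℂ*_ℚ`. -/
def phiC (a : Zhat) : CSolQ :=
  ⟨fun n => phiComp a n, ⟨fun n => Complex.exp_ne_zero _, phiComp_pow a⟩⟩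

/-- The baseleaf `ν : ℂ → ℂ*_ℚ`, `ν(z) = (e^{iz/n})ₙ`. -/
def nuC (z : ℂ) : CSolQ :=
  ⟨fun n => Complex.exp (Complex.I * z / (((n : ℕ+) : ℕ) : ℂ)),
   ⟨fun n => Complex.exp_ne_zero _, fun n k => exp_div_powC (Complex.I * z) n k⟩⟩

/-- `exp : ẑ × ℂ → ℂ*_ℚ`, `exp(a, z) = φ(a)·ν(z)`. -/
def expC (a : Zhat) (z : ℂ) : CSolQ := phiC a * nuC z

/-- The `n`-th power map on the Riemann sphere `Ĉ = ℂ ∪ {∞}`, with `∞ ↦ ∞`. -/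
def spherePow (k : ℕ) (x : OnePoint ℂ) : OnePoint ℂ :=
  Option.map (fun z : ℂ => z ^ k) x

/-- The adelic Riemann sphere `Ĉ_ℚ`: the inverse limit of Riemann spheres under
the branched covering maps `z ↦ z^{m/n}` for `n ∣ m`. -/
def SphereQ : Type :=
  {z : ℕ+ → OnePoint ℂ // ∀ (n k : ℕ+), spherePow ((k : ℕ+) : ℕ) (z (n * k)) = z n}

instance : TopologicalSpace SphereQ := by unfold SphereQ; infer_instance

/-- The leaf maps `exp(a, ·) : ℂ → ℂ*_ℚ ⊂ Ĉ_ℚ` of the adelic Riemann sphere. -/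
def expSph (a : Zhat) (z : ℂ) : SphereQ :=
  ⟨fun n => OnePoint.some (phiComp a n * Complex.exp (Complex.I * z / (((n : ℕ+) : ℕ) : ℂ))),
   fun n k => by
     show OnePoint.some ((phiComp a (n * k) * _) ^ ((k : ℕ+) : ℕ)) = _
     rw [mul_pow, phiComp_pow, exp_div_powC]⟩

/-- The renormalization operator `I_n` on functions on `ℂ*_ℚ`:
the average of `μ` over the fiber `π_n⁻¹(π_n(x))`, namely
`I_n(μ)(x) = ∫_{ẑ} μ(φ(n·a)·x) dη(a)`. -/
def Iren (η : Measure Zhat) (n : ℕ+) (f : CSolQ → ℂ) (x : CSolQ) : ℂ :=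
  ∫ a : Zhat, f (phiC (nsmulZ ((n : ℕ+) : ℕ) a) * x) ∂η

/-- The renormalization operator `I_n` on functions on `S¹_ℚ`. -/
def IrenS (η : Measure Zhat) (n : ℕ+) (f : SolQ → ℂ) (x : SolQ) : ℂ :=
  ∫ a : Zhat, f (phiS (nsmulZ ((n : ℕ+) : ℕ) a) * x) ∂η

/-- The character `χ_q = (π_n)^m : S¹_ℚ → S¹` associated to a rational `q = m/n`. -/
def chiQ (q : ℚ) (x : SolQ) : ℂ := (x.1 ⟨q.den, q.den_pos⟩) ^ q.num

/-- A function `f : ℝ → ℂ` is limit periodic if for every `ε > 0` there is a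
positive integer `N` such that `|f(x + 2πn) − f(x)| < ε` for all `x ∈ ℝ` and
all integers `n ∈ Nℤ`. -/
def LimitPeriodic (f : ℝ → ℂ) : Prop :=
  ∀ ε : ℝ, 0 < ε → ∃ N : ℕ+, ∀ x : ℝ, ∀ n : ℤ, ((N : ℕ+) : ℤ) ∣ n →
    ‖f (x + 2 * π * n) - f x‖ < ε

/-- A function `f : ℂ → ℂ` is limit periodic with respect to `x` if for every
`ε > 0` and compact `K ⊆ ℝ` there is a positive integer `N` with
`|f(z + 2πn) − f(z)| < ε` for all `z` with `Im z ∈ K` and all `n ∈ Nℤ`. -/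
def LimitPeriodicX (f : ℂ → ℂ) : Prop :=
  ∀ ε : ℝ, 0 < ε → ∀ K : Set ℝ, IsCompact K → ∃ N : ℕ+,
    ∀ z : ℂ, z.im ∈ K → ∀ n : ℤ, ((N : ℕ+) : ℤ) ∣ n →
      ‖f (z + 2 * π * n) - f z‖ < ε


/-- Uniform convergence on horizontal bands along the divisibility net. -/
def ConvBands (F : ℕ+ → ℂ → ℂ) (f : ℂ → ℂ) : Prop :=
  ∀ K : Set ℝ, IsCompact K → ∀ ε : ℝ, 0 < ε → ∃ N : ℕ+,
    ∀ n : ℕ+, ((N : ℕ+) : ℕ) ∣ ((n : ℕ+) : ℕ) →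
      ∀ z : ℂ, z.im ∈ K → ‖f z - F n z‖ < ε

namespace Stmt6


/-- The period `2πn`. -/
def per (n : ℕ+) : ℝ := 2 * π * ((n : ℕ+) : ℕ)

lemma per_pos (n : ℕ+) : 0 < per n := by
  have h1 : (0:ℝ) < ((n : ℕ+) : ℕ) := by exact_mod_cast n.pos
  have := Real.pi_pos
  unfold per; positivity

lemma per_ne (n : ℕ+) : per n ≠ 0 := (per_pos n).ne'

lemma two_pi_le_per (n : ℕ+) : 2 * π ≤ per n := by
  have h1 : (1:ℝ) ≤ ((n : ℕ+) : ℕ) := by exact_mod_cast n.one_le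
  have := Real.pi_pos
  unfold per; nlinarith

/-- The hat function. -/
def Lam (s : ℝ) : ℝ := max 0 (1 - |s|)

lemma Lam_nonneg (s : ℝ) : 0 ≤ Lam s := le_max_left _ _

lemma Lam_le_one (s : ℝ) : Lam s ≤ 1 := by
  unfold Lam
  have := abs_nonneg s
  apply max_le <;> linarith

lemma Lam_lip (a b : ℝ) : |Lam a - Lam b| ≤ |a - b| := by
  have h1 := abs_sub_abs_le_abs_sub a b
  have h2 := abs_sub_abs_le_abs_sub b a
  have h3 : |b - a| = |a - b| := abs_sub_comm b a
  unfold Lam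
  rcases le_total 0 (1 - |a|) with ha | ha <;> rcases le_total 0 (1 - |b|) with hb | hb <;>
    rw [abs_sub_le_iff] <;> constructor <;>
    simp [max_eq_left, max_eq_right, ha, hb] <;> linarith

lemma Lam_eq_zero {s : ℝ} (h : 1 ≤ |s|) : Lam s = 0 := max_eq_left (by linarith)

/-- The approximating periodic function. -/
def Fap (f : ℂ → ℂ) (n : ℕ+) (z : ℂ) : ℂ :=
  ((1 - Int.fract (z.re / per n) : ℝ) : ℂ)
      * f (((Int.fract (z.re / per n) * per n : ℝ) : ℂ) + (z.im : ℂ) * Complex.I)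
    + ((Int.fract (z.re / per n) : ℝ) : ℂ)
      * f ((((Int.fract (z.re / per n) - 1) * per n : ℝ) : ℂ) + (z.im : ℂ) * Complex.I)

lemma Fap_continuous (f : ℂ → ℂ) (hf : Continuous f) (n : ℕ+) : Continuous (Fap f n) := by
  have h : Continuous fun p : ℂ × ℝ =>
      ((1 - p.2 : ℝ) : ℂ) * f (((p.2 * per n : ℝ) : ℂ) + (p.1.im : ℂ) * Complex.I)
        + ((p.2 : ℝ) : ℂ) * f ((((p.2 - 1) * per n : ℝ) : ℂ) + (p.1.im : ℂ) * Complex.I) := by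
    fun_prop
  have := ContinuousOn.comp_fract (γ := ℂ) (s := fun z : ℂ => z.re / per n)
    (f := fun (z : ℂ) (t : ℝ) =>
      ((1 - t : ℝ) : ℂ) * f (((t * per n : ℝ) : ℂ) + (z.im : ℂ) * Complex.I)
        + ((t : ℝ) : ℂ) * f ((((t - 1) * per n : ℝ) : ℂ) + (z.im : ℂ) * Complex.I))
    (h.continuousOn) (by fun_prop) (by intro z; simp)
  exact this

lemma re_eq (n : ℕ+) (z : ℂ) : (z + ((per n : ℝ) : ℂ)).re = z.re + per n := by simp

lemma Fap_periodic (f : ℂ → ℂ) (n : ℕ+) (z : ℂ) :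
    Fap f n (z + 2 * π * ((n : ℕ+) : ℕ)) = Fap f n z := by
  have hc : (2 * (π : ℂ) * (((n : ℕ+) : ℕ) : ℂ)) = ((per n : ℝ) : ℂ) := by
    unfold per; push_cast; ring
  rw [show z + 2 * π * ((n : ℕ+) : ℕ) = z + ((per n : ℝ) : ℂ) from by rw [← hc]]
  unfold Fap
  have h1 : (z + ((per n : ℝ) : ℂ)).re / per n = z.re / per n + 1 := by
    rw [re_eq, add_div, div_self (per_ne n)]
  have h2 : (z + ((per n : ℝ) : ℂ)).im = z.im := by simp
  rw [h1, h2, Int.fract_add_one]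

/-- The basic shift representation. -/
lemma shift_repr (n : ℕ+) (z : ℂ) (j : ℤ) :
    (((Int.fract (z.re / per n) - j) * per n : ℝ) : ℂ) + (z.im : ℂ) * Complex.I
      + 2 * π * (((⌊z.re / per n⌋ + j) * ((n : ℕ+) : ℕ) : ℤ) : ℂ) = z := by
  have key : (Int.fract (z.re / per n) - j) * per n
      + 2 * π * (((⌊z.re / per n⌋ + j) * ((n : ℕ+) : ℕ) : ℤ) : ℝ) = z.re := by
    have hu : z.re / per n * per n = z.re := div_mul_cancel₀ _ (per_ne n)
    rw [Int.fract]
    push_cast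
    unfold per at *
    nlinarith [hu]
  calc (((Int.fract (z.re / per n) - j) * per n : ℝ) : ℂ) + (z.im : ℂ) * Complex.I
        + 2 * π * (((⌊z.re / per n⌋ + j) * ((n : ℕ+) : ℕ) : ℤ) : ℂ)
      = (((Int.fract (z.re / per n) - j) * per n
          + 2 * π * (((⌊z.re / per n⌋ + j) * ((n : ℕ+) : ℕ) : ℤ) : ℝ) : ℝ) : ℂ)
          + (z.im : ℂ) * Complex.I := by push_cast; ring
    _ = (z.re : ℂ) + (z.im : ℂ) * Complex.I := by rw [key]
    _ = z := Complex.re_add_im z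

lemma im_aux (r y : ℝ) : ((r : ℂ) + (y : ℂ) * Complex.I).im = y := by simp



lemma Fap_close (f : ℂ → ℂ) {ε : ℝ} {K : Set ℝ} {N : ℕ+}
    (hN : ∀ z : ℂ, z.im ∈ K → ∀ m : ℤ, ((N : ℕ+) : ℤ) ∣ m →
      ‖f (z + 2 * π * m) - f z‖ < ε)
    (n : ℕ+) (hdvd : ((N : ℕ+) : ℕ) ∣ ((n : ℕ+) : ℕ))
    (z : ℂ) (hz : z.im ∈ K) : ‖f z - Fap f n z‖ < ε := by
  set t : ℝ := Int.fract (z.re / per n) with ht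
  set k : ℤ := ⌊z.re / per n⌋ with hk
  set w₁ : ℂ := ((t * per n : ℝ) : ℂ) + (z.im : ℂ) * Complex.I with hw₁
  set w₂ : ℂ := (((t - 1) * per n : ℝ) : ℂ) + (z.im : ℂ) * Complex.I with hw₂
  have hdz : ((N : ℕ+) : ℤ) ∣ ((n : ℕ+) : ℕ) := Int.natCast_dvd_natCast.mpr hdvd
  have h1 : ‖f z - f w₁‖ < ε := by
    have := hN w₁ (by rw [hw₁, im_aux]; exact hz) ((k + 0) * ((n : ℕ+) : ℕ))
      (Dvd.dvd.mul_left hdz _)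
    have he : w₁ + 2 * π * (((k + 0) * ((n : ℕ+) : ℕ) : ℤ) : ℂ) = z := by
      have := shift_repr n z 0
      rw [hw₁]; push_cast at this ⊢; convert this using 3 <;> push_cast <;> ring
    rwa [he] at this
  have h2 : ‖f z - f w₂‖ < ε := by
    have := hN w₂ (by rw [hw₂, im_aux]; exact hz) ((k + 1) * ((n : ℕ+) : ℕ))
      (Dvd.dvd.mul_left hdz _)
    have he : w₂ + 2 * π * (((k + 1) * ((n : ℕ+) : ℕ) : ℤ) : ℂ) = z := by
      have := shift_repr n z 1
      rw [hw₂]; push_cast at this ⊢; convert this using 3 <;> push_cast <;> ring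
    rwa [he] at this
  have hkey : f z - Fap f n z
      = ((1 - t : ℝ) : ℂ) * (f z - f w₁) + ((t : ℝ) : ℂ) * (f z - f w₂) := by
    unfold Fap
    rw [← ht, ← hw₁, ← hw₂]
    push_cast
    ring
  rw [hkey]
  have ht0 : 0 ≤ t := Int.fract_nonneg _
  have ht1 : t < 1 := Int.fract_lt_one _
  calc ‖((1 - t : ℝ) : ℂ) * (f z - f w₁) + ((t : ℝ) : ℂ) * (f z - f w₂)‖
      ≤ ‖((1 - t : ℝ) : ℂ) * (f z - f w₁)‖ + ‖((t : ℝ) : ℂ) * (f z - f w₂)‖ :=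
        norm_add_le _ _
    _ = (1 - t) * ‖f z - f w₁‖ + t * ‖f z - f w₂‖ := by
        rw [norm_mul, norm_mul, Complex.norm_real, Complex.norm_real, Real.norm_eq_abs, Real.norm_eq_abs,
          _root_.abs_of_nonneg (by linarith), _root_.abs_of_nonneg ht0]
    _ < ε := by nlinarith [norm_nonneg (f z - f w₁), norm_nonneg (f z - f w₂)]

lemma Fap_conv (f : ℂ → ℂ) (hlp : LimitPeriodicX f) : ConvBands (Fap f) f := by
  intro K hK ε hε
  obtain ⟨N, hN⟩ := hlp ε hε K hK
  exact ⟨N, fun n hdvd z hz => Fap_close f hN n hdvd z hz⟩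



/-- The closed band over a rectangle, as an image. -/
def band (a b : ℝ) (K : Set ℝ) : Set ℂ :=
  (fun p : ℝ × ℝ => ((p.1 : ℂ) + (p.2 : ℂ) * Complex.I)) '' (Set.Icc a b ×ˢ K)

lemma band_compact {a b : ℝ} {K : Set ℝ} (hK : IsCompact K) : IsCompact (band a b K) :=
  (isCompact_Icc.prod hK).image (by fun_prop)

lemma mem_band {a b : ℝ} {K : Set ℝ} {x y : ℝ} (hx1 : a ≤ x) (hx2 : x ≤ b) (hy : y ∈ K) :
    ((x : ℂ) + (y : ℂ) * Complex.I) ∈ band a b K :=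
  ⟨(x, y), ⟨⟨hx1, hx2⟩, hy⟩, rfl⟩

lemma mem_band' {a b : ℝ} {K : Set ℝ} {z : ℂ} (hx1 : a ≤ z.re) (hx2 : z.re ≤ b)
    (hy : z.im ∈ K) : z ∈ band a b K := by
  rw [← Complex.re_add_im z]; exact mem_band hx1 hx2 hy

/-- `z` equals its fundamental-strip representative plus a `2πkN` shift. -/
lemma repr_eq (N : ℕ+) (z : ℂ) :
    z = ((Int.fract (z.re / per N) * per N : ℝ) : ℂ) + (z.im : ℂ) * Complex.I
        + 2 * π * ((⌊z.re / per N⌋ * ((N : ℕ+) : ℕ) : ℤ) : ℂ) := by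
  have h := shift_repr N z 0
  simp only [Int.cast_zero, sub_zero, add_zero] at h
  exact h.symm

lemma bdd_band (f : ℂ → ℂ) (hf : Continuous f) (hlp : LimitPeriodicX f)
    {K : Set ℝ} (hK : IsCompact K) :
    ∃ M : ℝ, 0 ≤ M ∧ ∀ z : ℂ, z.im ∈ K → ‖f z‖ ≤ M := by
  obtain ⟨N, hN⟩ := hlp 1 one_pos K hK
  obtain ⟨C, hC⟩ := (band_compact (a := 0) (b := per N) hK).exists_bound_of_continuousOn
    hf.continuousOn
  refine ⟨max C 0 + 1, by positivity, fun z hz => ?_⟩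
  set w : ℂ := ((Int.fract (z.re / per N) * per N : ℝ) : ℂ) + (z.im : ℂ) * Complex.I with hw
  have hwmem : w ∈ band 0 (per N) K := by
    rw [hw]
    exact mem_band (mul_nonneg (Int.fract_nonneg _) (per_pos N).le)
      (mul_le_of_le_one_left (per_pos N).le (Int.fract_lt_one _).le) hz
  have hrep : z = w + 2 * π * ((⌊z.re / per N⌋ * ((N : ℕ+) : ℕ) : ℤ) : ℂ) := repr_eq N z
  have hclose : ‖f z - f w‖ < 1 := by
    have := hN w (by rw [hw, im_aux]; exact hz) (⌊z.re / per N⌋ * ((N : ℕ+) : ℕ))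
      (Dvd.dvd.mul_left dvd_rfl _)
    rw [← hrep] at this; exact this
  calc ‖f z‖ ≤ ‖f w‖ + ‖f z - f w‖ := by
        have := norm_add_le (f w) (f z - f w); simpa using this
    _ ≤ max C 0 + 1 := add_le_add (le_trans (hC w hwmem) (le_max_left _ _)) hclose.le

lemma uc_band (f : ℂ → ℂ) (hf : Continuous f) (hlp : LimitPeriodicX f)
    {K : Set ℝ} (hK : IsCompact K) {ε : ℝ} (hε : 0 < ε) :
    ∃ δ : ℝ, 0 < δ ∧ δ ≤ 1 ∧ ∀ z w : ℂ, z.im ∈ K → w.im ∈ K → dist z w ≤ δ →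
      ‖f z - f w‖ ≤ ε := by
  have hε3 : 0 < ε / 3 := by linarith
  obtain ⟨N, hN⟩ := hlp (ε / 3) hε3 K hK
  have huc := (band_compact (a := -1) (b := per N + 1) hK).uniformContinuousOn_of_continuous
    hf.continuousOn
  rw [Metric.uniformContinuousOn_iff] at huc
  obtain ⟨δ', hδ'pos, hδ'⟩ := huc (ε / 3) hε3
  refine ⟨min 1 (δ' / 2), by positivity, min_le_left _ _, fun z w hz hw hd => ?_⟩
  set z' : ℂ := ((Int.fract (z.re / per N) * per N : ℝ) : ℂ) + (z.im : ℂ) * Complex.I with hz'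
  set c : ℂ := 2 * π * ((⌊z.re / per N⌋ * ((N : ℕ+) : ℕ) : ℤ) : ℂ) with hc
  have hrepz : z = z' + c := repr_eq N z
  set w' : ℂ := w - c with hw'
  have hz're : z'.re = Int.fract (z.re / per N) * per N := by rw [hz']; simp
  have hz'im : z'.im = z.im := by rw [hz']; exact im_aux _ _
  have hcim : c.im = 0 := by rw [hc]; simp
  have hcre : c.re = z.re - z'.re := by
    have := congrArg Complex.re hrepz; simp at this; linarith
  have hw'im : w'.im = w.im := by rw [hw']; simp [hcim]
  have hdzw : dist z w ≤ 1 := hd.trans (min_le_left _ _)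
  have hrediff : |w.re - z.re| ≤ 1 := by
    have h1 : |(w - z).re| ≤ ‖w - z‖ := Complex.abs_re_le_norm _
    have h2 : ‖w - z‖ = dist z w := by
      rw [Complex.dist_eq, norm_sub_rev]
    simp only [Complex.sub_re] at h1
    rw [h2] at h1; linarith
  have hz'mem : z' ∈ band (-1) (per N + 1) K := by
    apply mem_band' (z := z') _ _ (by rw [hz'im]; exact hz)
    · rw [hz're]; have := mul_nonneg (Int.fract_nonneg (z.re / per N)) (per_pos N).le; linarith
    · rw [hz're]
      have := mul_le_of_le_one_left (per_pos N).le (Int.fract_lt_one (z.re / per N)).le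
      linarith
  have hw're : w'.re = w.re - z.re + z'.re := by rw [hw']; simp [hcre]; ring
  have hfr0 : 0 ≤ Int.fract (z.re / per N) * per N :=
    mul_nonneg (Int.fract_nonneg _) (per_pos N).le
  have hfr1 : Int.fract (z.re / per N) * per N ≤ per N :=
    mul_le_of_le_one_left (per_pos N).le (Int.fract_lt_one _).le
  have hw'mem : w' ∈ band (-1) (per N + 1) K := by
    apply mem_band' (z := w') _ _ (by rw [hw'im]; exact hw)
    · rw [hw're, hz're]; cases abs_le.mp hrediff; linarith
    · rw [hw're, hz're]; cases abs_le.mp hrediff; linarith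
  have hNz : ‖f z - f z'‖ < ε / 3 := by
    have h := hN z' (by rw [hz'im]; exact hz) (⌊z.re / per N⌋ * ((N : ℕ+) : ℕ))
      (Dvd.dvd.mul_left dvd_rfl _)
    have heq : z' + 2 * π * ((⌊z.re / per N⌋ * ((N : ℕ+) : ℕ) : ℤ) : ℂ) = z := by
      rw [← hc]; exact hrepz.symm
    rwa [heq] at h
  have hNw : ‖f w - f w'‖ < ε / 3 := by
    have h := hN w' (by rw [hw'im]; exact hw) (⌊z.re / per N⌋ * ((N : ℕ+) : ℕ))
      (Dvd.dvd.mul_left dvd_rfl _)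
    have heq : w' + 2 * π * ((⌊z.re / per N⌋ * ((N : ℕ+) : ℕ) : ℤ) : ℂ) = w := by
      rw [← hc, hw']; ring
    rwa [heq] at h
  have hmid : dist (f z') (f w') < ε / 3 := by
    apply hδ' z' hz'mem w' hw'mem
    have : dist z' w' = dist z w := by
      rw [Complex.dist_eq, Complex.dist_eq]
      congr 1
      rw [hrepz, hw']; ring
    rw [this]
    calc dist z w ≤ min 1 (δ' / 2) := hd
      _ ≤ δ' / 2 := min_le_right _ _
      _ < δ' := by linarith
  calc ‖f z - f w‖ = ‖(f z - f z') + (f z' - f w') + (f w' - f w)‖ := by ring_nf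
    _ ≤ ‖(f z - f z') + (f z' - f w')‖ + ‖f w' - f w‖ := norm_add_le _ _
    _ ≤ ‖f z - f z'‖ + ‖f z' - f w'‖ + ‖f w' - f w‖ := by
        have := norm_add_le (f z - f z') (f z' - f w'); linarith
    _ ≤ ε := by
        rw [← dist_eq_norm] at *
        have h3 : dist (f w') (f w) = dist (f w) (f w') := dist_comm _ _
        rw [dist_eq_norm] at hNz hNw
        rw [dist_eq_norm]
        have e1 : ‖f z - f z'‖ < ε/3 := hNz
        have e2 : ‖f w' - f w‖ < ε/3 := by rw [← norm_neg]; simpa using hNw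
        have e3 : ‖f z' - f w'‖ < ε/3 := by rw [← dist_eq_norm]; exact hmid
        linarith



/-- One hat-weighted term. -/
def term (f : ℂ → ℂ) (n : ℕ+) (z : ℂ) (c : ℝ) : ℂ :=
  ((Lam (z.re / per n - c) : ℝ) : ℂ)
    * f ((((z.re / per n - c) * per n : ℝ) : ℂ) + (z.im : ℂ) * Complex.I)

lemma term_floor (f : ℂ → ℂ) (n : ℕ+) (z : ℂ) :
    term f n z ((⌊z.re / per n⌋ : ℤ) : ℝ) + term f n z (((⌊z.re / per n⌋ : ℤ) : ℝ) + 1)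
      = Fap f n z := by
  set u : ℝ := z.re / per n with hu
  have hfr : u - ((⌊u⌋ : ℤ) : ℝ) = Int.fract u := by rw [Int.fract]
  have h0 : 0 ≤ Int.fract u := Int.fract_nonneg u
  have h1 : Int.fract u < 1 := Int.fract_lt_one u
  have hL1 : Lam (u - ((⌊u⌋ : ℤ) : ℝ)) = 1 - Int.fract u := by
    rw [hfr]; unfold Lam
    rw [_root_.abs_of_nonneg h0]; exact max_eq_right (by linarith)
  have hL2 : Lam (u - (((⌊u⌋ : ℤ) : ℝ) + 1)) = Int.fract u := by
    have : u - (((⌊u⌋ : ℤ) : ℝ) + 1) = Int.fract u - 1 := by rw [← hfr]; ring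
    rw [this]; unfold Lam
    rw [_root_.abs_of_nonpos (by linarith)]
    rw [show 1 - -(Int.fract u - 1) = Int.fract u from by ring]
    exact max_eq_right h0
  have ha2 : u - (((⌊u⌋ : ℤ) : ℝ) + 1) = Int.fract u - 1 := by rw [← hfr]; ring
  unfold term Fap
  rw [← hu, hL1, hL2, hfr, ha2]

lemma term_zero (f : ℂ → ℂ) (n : ℕ+) (z : ℂ) {c : ℝ} (h : 1 ≤ |z.re / per n - c|) :
    term f n z c = 0 := by
  unfold term; rw [Lam_eq_zero h]; simp

lemma hat_repr (f : ℂ → ℂ) (n : ℕ+) (z : ℂ) (a : ℤ) (ha1 : a ≤ ⌊z.re / per n⌋)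
    (ha2 : ⌊z.re / per n⌋ ≤ a + 2) :
    Fap f n z = ∑ j ∈ Finset.range 4, term f n z ((a : ℝ) + (j : ℕ)) := by
  set u : ℝ := z.re / per n with hu
  set k : ℤ := ⌊u⌋ with hk
  have hfl : (k : ℝ) ≤ u := Int.floor_le u
  have hfu : u < (k : ℝ) + 1 := Int.lt_floor_add_one u
  have hsum : ∑ j ∈ Finset.range 4, term f n z ((a : ℝ) + (j : ℕ))
      = term f n z ((a : ℝ) + 0) + term f n z ((a : ℝ) + 1)
        + term f n z ((a : ℝ) + 2) + term f n z ((a : ℝ) + 3) := by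
    rw [Finset.sum_range_succ, Finset.sum_range_succ, Finset.sum_range_succ,
      Finset.sum_range_one]
    norm_num
  rw [hsum]
  have hcase : k = a ∨ k = a + 1 ∨ k = a + 2 := by omega
  rcases hcase with h | h | h
  · have e1 : (a : ℝ) + 0 = (k : ℝ) := by rw [h]; ring
    have e2 : (a : ℝ) + 1 = (k : ℝ) + 1 := by rw [h]
    have z3 : term f n z ((a : ℝ) + 2) = 0 := by
      apply term_zero; rw [← hu]
      rw [le_abs]; right; push_cast [h] at hfu ⊢; linarith
    have z4 : term f n z ((a : ℝ) + 3) = 0 := by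
      apply term_zero; rw [← hu]
      rw [le_abs]; right; push_cast [h] at hfu ⊢; linarith
    rw [e1, e2, z3, z4, add_zero, add_zero, term_floor]
  · have e2 : (a : ℝ) + 1 = (k : ℝ) := by push_cast [h]; ring
    have e3 : (a : ℝ) + 2 = (k : ℝ) + 1 := by push_cast [h]; ring
    have z1 : term f n z ((a : ℝ) + 0) = 0 := by
      apply term_zero; rw [← hu]
      rw [le_abs]; left; push_cast [h] at hfl ⊢; linarith
    have z4 : term f n z ((a : ℝ) + 3) = 0 := by
      apply term_zero; rw [← hu]
      rw [le_abs]; right; push_cast [h] at hfu ⊢; linarith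
    rw [e2, e3, z1, z4, zero_add, add_zero, term_floor]
  · have e3 : (a : ℝ) + 2 = (k : ℝ) := by push_cast [h]; ring
    have e4 : (a : ℝ) + 3 = (k : ℝ) + 1 := by push_cast [h]; ring
    have z1 : term f n z ((a : ℝ) + 0) = 0 := by
      apply term_zero; rw [← hu]
      rw [le_abs]; left; push_cast [h] at hfl ⊢; linarith
    have z2 : term f n z ((a : ℝ) + 1) = 0 := by
      apply term_zero; rw [← hu]
      rw [le_abs]; left; push_cast [h] at hfl ⊢; linarith
    rw [e3, e4, z1, z2, zero_add, zero_add, term_floor]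

set_option maxHeartbeats 1000000 in
lemma Fap_equicont (f : ℂ → ℂ) (hf : Continuous f) (hlp : LimitPeriodicX f) :
    Equicontinuous (Fap f) := by
  intro z₀
  rw [Metric.equicontinuousAt_iff]
  intro ε hε
  have hpi := Real.pi_pos
  have hpi3 := Real.pi_gt_three
  set K : Set ℝ := Set.Icc (z₀.im - 1) (z₀.im + 1) with hKdef
  have hK : IsCompact K := isCompact_Icc
  obtain ⟨M, hM0, hM⟩ := bdd_band f hf hlp hK
  obtain ⟨δ₁, hδ₁pos, hδ₁le, hδ₁⟩ := uc_band f hf hlp hK (ε := ε / 16) (by positivity)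
  set δ : ℝ := min (min 1 (δ₁ / 2)) (π * ε / (16 * (M + 1))) with hδdef
  have hδpos : 0 < δ := lt_min (lt_min one_pos (by positivity)) (by positivity)
  have hδ1 : δ ≤ 1 := le_trans (min_le_left _ _) (min_le_left _ _)
  have hδd : δ ≤ δ₁ / 2 := le_trans (min_le_left _ _) (min_le_right _ _)
  have hδe : δ ≤ π * ε / (16 * (M + 1)) := min_le_right _ _
  refine ⟨δ, hδpos, fun z hzd n => ?_⟩
  have hdist : dist z z₀ < δ := hzd
  have hre : |z.re - z₀.re| ≤ dist z z₀ := by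
    have := Complex.abs_re_le_norm (z - z₀)
    rw [Complex.sub_re] at this
    rwa [Complex.dist_eq]
  have him : |z.im - z₀.im| ≤ dist z z₀ := by
    have := Complex.abs_im_le_norm (z - z₀)
    rw [Complex.sub_im] at this
    rwa [Complex.dist_eq]
  have hzK : z.im ∈ K := by
    rw [hKdef]; cases abs_le.mp him; constructor <;> linarith
  have hz₀K : z₀.im ∈ K := by
    rw [hKdef]; constructor <;> linarith
  set P : ℝ := per n with hPdef
  have hP : 0 < P := per_pos n
  have hP2 : 2 * π ≤ P := two_pi_le_per n
  set u : ℝ := z.re / P with hudef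
  set u₀ : ℝ := z₀.re / P with hu₀def
  have hdiff : u - u₀ = (z.re - z₀.re) / P := by rw [hudef, hu₀def]; ring
  have huu : |u - u₀| = |z.re - z₀.re| / P := by
    rw [hdiff, abs_div, _root_.abs_of_pos hP]
  have hreδ : |z.re - z₀.re| < δ := lt_of_le_of_lt hre hdist
  have himδ : |z.im - z₀.im| < δ := lt_of_le_of_lt him hdist
  have huusmall : |u - u₀| < δ / (2 * π) := by
    rw [huu, div_lt_div_iff₀ hP (by positivity)]
    nlinarith [abs_nonneg (z.re - z₀.re)]
  have huu1 : |u - u₀| < 1 := by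
    apply huusmall.trans_le
    rw [div_le_one (by positivity)]
    nlinarith
  set a : ℤ := ⌊u₀⌋ - 1 with hadef
  have hfl₀ : ((⌊u₀⌋ : ℤ) : ℝ) ≤ u₀ := Int.floor_le u₀
  have hfu₀ : u₀ < ((⌊u₀⌋ : ℤ) : ℝ) + 1 := Int.lt_floor_add_one u₀
  have habs := abs_lt.mp huu1
  have ha1 : a ≤ ⌊u⌋ := by
    apply Int.le_floor.mpr
    push_cast [hadef]
    linarith [habs.2]
  have ha2 : ⌊u⌋ ≤ a + 2 := by
    have : ⌊u⌋ < ⌊u₀⌋ + 2 := by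
      apply Int.floor_lt.mpr
      push_cast
      linarith [habs.1]
    omega
  have ha01 : a ≤ ⌊u₀⌋ := by omega
  have ha02 : ⌊u₀⌋ ≤ a + 2 := by omega
  rw [dist_eq_norm, hat_repr f n z₀ a ha01 ha02, hat_repr f n z a ha1 ha2,
    ← Finset.sum_sub_distrib]
  have humul : (u₀ - u) * P = z₀.re - z.re := by
    rw [hu₀def, hudef]
    field_simp
  have hterm : ∀ j ∈ Finset.range 4,
      ‖term f n z₀ ((a : ℝ) + (j : ℕ)) - term f n z ((a : ℝ) + (j : ℕ))‖
        ≤ |u₀ - u| * M + ε / 16 := by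
    intro j _
    set c : ℝ := (a : ℝ) + (j : ℕ) with hcdef
    set v₀ : ℂ := (((u₀ - c) * P : ℝ) : ℂ) + (z₀.im : ℂ) * Complex.I with hv₀def
    set v : ℂ := (((u - c) * P : ℝ) : ℂ) + (z.im : ℂ) * Complex.I with hvdef
    have ht₀ : term f n z₀ c = ((Lam (u₀ - c) : ℝ) : ℂ) * f v₀ := by
      unfold term; rw [← hPdef, ← hu₀def, ← hv₀def]
    have ht : term f n z c = ((Lam (u - c) : ℝ) : ℂ) * f v := by
      unfold term; rw [← hPdef, ← hudef, ← hvdef]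
    rw [ht₀, ht]
    have key : ((Lam (u₀ - c) : ℝ) : ℂ) * f v₀ - ((Lam (u - c) : ℝ) : ℂ) * f v
        = ((Lam (u₀ - c) - Lam (u - c) : ℝ) : ℂ) * f v₀
          + ((Lam (u - c) : ℝ) : ℂ) * (f v₀ - f v) := by push_cast; ring
    rw [key]
    have hfv₀ : ‖f v₀‖ ≤ M := hM v₀ (by rw [hv₀def, im_aux]; exact hz₀K)
    have hvdiff : v₀ - v = (((z₀.re - z.re) : ℝ) : ℂ) + ((z₀.im - z.im : ℝ) : ℂ) * Complex.I := by
      rw [hv₀def, hvdef, ← humul]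
      push_cast
      ring
    have hdv : dist v₀ v ≤ δ₁ := by
      rw [dist_eq_norm, hvdiff]
      calc ‖(((z₀.re - z.re) : ℝ) : ℂ) + ((z₀.im - z.im : ℝ) : ℂ) * Complex.I‖
          ≤ ‖(((z₀.re - z.re) : ℝ) : ℂ)‖ + ‖((z₀.im - z.im : ℝ) : ℂ) * Complex.I‖ :=
            norm_add_le _ _
        _ = |z₀.re - z.re| + |z₀.im - z.im| := by
            rw [norm_mul, Complex.norm_I, mul_one, Complex.norm_real, Complex.norm_real,
              Real.norm_eq_abs, Real.norm_eq_abs]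
        _ ≤ δ₁ := by
            rw [abs_sub_comm z₀.re z.re, abs_sub_comm z₀.im z.im]
            linarith
    have hfv : ‖f v₀ - f v‖ ≤ ε / 16 :=
      hδ₁ v₀ v (by rw [hv₀def, im_aux]; exact hz₀K) (by rw [hvdef, im_aux]; exact hzK) hdv
    have hlip : |Lam (u₀ - c) - Lam (u - c)| ≤ |u₀ - u| := by
      have := Lam_lip (u₀ - c) (u - c)
      rwa [show u₀ - c - (u - c) = u₀ - u from by ring] at this
    calc ‖((Lam (u₀ - c) - Lam (u - c) : ℝ) : ℂ) * f v₀
          + ((Lam (u - c) : ℝ) : ℂ) * (f v₀ - f v)‖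
        ≤ ‖((Lam (u₀ - c) - Lam (u - c) : ℝ) : ℂ) * f v₀‖
          + ‖((Lam (u - c) : ℝ) : ℂ) * (f v₀ - f v)‖ := norm_add_le _ _
      _ = |Lam (u₀ - c) - Lam (u - c)| * ‖f v₀‖ + |Lam (u - c)| * ‖f v₀ - f v‖ := by
          rw [norm_mul, norm_mul, Complex.norm_real, Complex.norm_real,
            Real.norm_eq_abs, Real.norm_eq_abs]
      _ ≤ |u₀ - u| * M + 1 * (ε / 16) := by
          apply add_le_add
          · exact mul_le_mul hlip hfv₀ (norm_nonneg _) (abs_nonneg _)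
          · apply mul_le_mul _ hfv (norm_nonneg _) zero_le_one
            rw [_root_.abs_of_nonneg (Lam_nonneg _)]
            exact Lam_le_one _
      _ = |u₀ - u| * M + ε / 16 := by ring
  calc ‖∑ j ∈ Finset.range 4,
        (term f n z₀ ((a : ℝ) + (j : ℕ)) - term f n z ((a : ℝ) + (j : ℕ)))‖
      ≤ ∑ j ∈ Finset.range 4,
          ‖term f n z₀ ((a : ℝ) + (j : ℕ)) - term f n z ((a : ℝ) + (j : ℕ))‖ :=
        norm_sum_le _ _
    _ ≤ ∑ _j ∈ Finset.range 4, (|u₀ - u| * M + ε / 16) := Finset.sum_le_sum hterm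
    _ = 4 * (|u₀ - u| * M + ε / 16) := by
        rw [Finset.sum_const, Finset.card_range, nsmul_eq_mul]
        norm_num
    _ < ε := by
        have h1 : |u₀ - u| < δ / (2 * π) := by rwa [abs_sub_comm]
        have h3 : δ * (16 * (M + 1)) ≤ π * ε := by
          have h4 := mul_le_mul_of_nonneg_right hδe
            (show (0:ℝ) ≤ 16 * (M + 1) by positivity)
          rwa [div_mul_cancel₀ _ (by positivity : (16 * (M + 1) : ℝ) ≠ 0)] at h4
        have h2 : δ / (2 * π) * (M + 1) ≤ ε / 32 := by
          rw [div_mul_eq_mul_div, div_le_div_iff₀ (by positivity) (by norm_num)]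
          nlinarith [h3]
        nlinarith [abs_nonneg (u₀ - u)]



lemma per_int_mul (F : ℂ → ℂ) (N : ℕ+)
    (hper : ∀ z : ℂ, F (z + 2 * π * ((N : ℕ+) : ℕ)) = F z)
    (z : ℂ) (m : ℤ) (hdvd : ((N : ℕ+) : ℤ) ∣ m) :
    F (z + 2 * π * (m : ℂ)) = F z := by
  obtain ⟨j, rfl⟩ := hdvd
  have hp : Function.Periodic F (2 * π * ((N : ℕ+) : ℕ) : ℂ) := hper
  have := (hp.zsmul j) z
  rw [show z + 2 * π * ((((N : ℕ+) : ℤ) * j : ℤ) : ℂ)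
      = z + j • (2 * π * ((N : ℕ+) : ℕ) : ℂ) from by
    rw [zsmul_eq_mul]; push_cast; ring]
  exact this

lemma rev_lp (f : ℂ → ℂ) (F : ℕ+ → ℂ → ℂ)
    (hper : ∀ n : ℕ+, ∀ z : ℂ, F n (z + 2 * π * ((n : ℕ+) : ℕ)) = F n z)
    (hconv : ConvBands F f) : LimitPeriodicX f := by
  intro ε hε K hK
  obtain ⟨N, hN⟩ := hconv K hK (ε / 3) (by linarith)
  have hNN := hN N dvd_rfl
  refine ⟨N, fun z hz m hdvd => ?_⟩
  have himz : (z + 2 * π * (m : ℂ)).im = z.im := by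
    rw [show (2 : ℂ) * π * (m : ℂ) = (((2 * π * m : ℝ)) : ℂ) from by push_cast; ring]
    simp
  have h1 : ‖f (z + 2 * π * (m : ℂ)) - F N (z + 2 * π * (m : ℂ))‖ < ε / 3 :=
    hNN _ (by rw [himz]; exact hz)
  have h2 : ‖f z - F N z‖ < ε / 3 := hNN z hz
  have h3 : F N (z + 2 * π * (m : ℂ)) = F N z := per_int_mul (F N) N (hper N) z m hdvd
  calc ‖f (z + 2 * π * (m : ℂ)) - f z‖
      = ‖(f (z + 2 * π * (m : ℂ)) - F N (z + 2 * π * (m : ℂ)))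
          - (f z - F N z)‖ := by rw [h3]; ring_nf
    _ ≤ ‖f (z + 2 * π * (m : ℂ)) - F N (z + 2 * π * (m : ℂ))‖ + ‖f z - F N z‖ :=
        norm_sub_le _ _
    _ < ε := by linarith

lemma rev_cont (f : ℂ → ℂ) (F : ℕ+ → ℂ → ℂ) (hcont : ∀ n, Continuous (F n))
    (hconv : ConvBands F f) : Continuous f := by
  rw [continuous_iff_continuousAt]
  intro z₀
  set K : Set ℝ := Set.Icc (z₀.im - 1) (z₀.im + 1) with hKdef
  have hK : IsCompact K := isCompact_Icc
  set S : Set ℂ := Complex.im ⁻¹' K with hSdef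
  have hNj : ∀ j : ℕ, ∃ N : ℕ+, ∀ n : ℕ+, ((N : ℕ+) : ℕ) ∣ ((n : ℕ+) : ℕ) →
      ∀ z : ℂ, z.im ∈ K → ‖f z - F n z‖ < 1 / (j + 1) := by
    intro j
    exact hconv K hK (1 / (j + 1)) (by positivity)
  choose N hN using hNj
  set G : ℕ → ℕ+ := fun j => ∏ i ∈ Finset.range (j + 1), N i with hGdef
  have hGdvd : ∀ j i : ℕ, i ≤ j → ((N i : ℕ+) : ℕ) ∣ ((G j : ℕ+) : ℕ) := by
    intro j i hij
    have h1 : N i ∣ G j := Finset.dvd_prod_of_mem N (Finset.mem_range.mpr (by omega))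
    obtain ⟨c, hc⟩ := h1
    exact ⟨(c : ℕ), by rw [hc, PNat.mul_coe]⟩
  have htu : TendstoUniformlyOn (fun j => F (G j)) f atTop S := by
    rw [Metric.tendstoUniformlyOn_iff]
    intro ε hε
    obtain ⟨j₀, hj₀⟩ := exists_nat_one_div_lt hε
    rw [eventually_atTop]
    refine ⟨j₀, fun j hj z hzS => ?_⟩
    have h1 : ‖f z - F (G j) z‖ < 1 / (j₀ + 1) :=
      hN j₀ (G j) (hGdvd j j₀ hj) z hzS
    rw [dist_eq_norm]
    calc ‖f z - F (G j) z‖ < 1 / (j₀ + 1) := h1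
      _ < ε := by exact_mod_cast hj₀
  have hcS : ContinuousOn f S :=
    htu.continuousOn (Eventually.of_forall fun j => (hcont (G j)).continuousOn).frequently
  have hSnhds : S ∈ nhds z₀ := by
    have hopen : IsOpen (Complex.im ⁻¹' Set.Ioo (z₀.im - 1) (z₀.im + 1)) :=
      (isOpen_Ioo).preimage Complex.continuous_im
    apply mem_nhds_iff.mpr
    refine ⟨Complex.im ⁻¹' Set.Ioo (z₀.im - 1) (z₀.im + 1), ?_, hopen, ?_⟩
    · intro w hw
      exact Set.Ioo_subset_Icc_self hw
    · simp only [Set.mem_preimage, Set.mem_Ioo]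
      constructor <;> linarith
  exact hcS.continuousAt hSnhds


end Stmt6

/-- A map `f : ℂ → ℂ` is continuous and limit periodic with
respect to `x` iff there is a sequence of continuous `2πn`-periodic maps
converging to `f` uniformly on horizontal bands along the divisibility net;
moreover, the sequence can be chosen equicontinuous. -/
theorem statement6 (f : ℂ → ℂ) :
    ((Continuous f ∧ LimitPeriodicX f) ↔
      ∃ F : ℕ+ → ℂ → ℂ, (∀ n, Continuous (F n)) ∧
        (∀ n : ℕ+, ∀ z : ℂ, F n (z + 2 * π * ((n : ℕ+) : ℕ)) = F n z) ∧
        ConvBands F f) ∧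
    ((Continuous f ∧ LimitPeriodicX f) →
      ∃ F : ℕ+ → ℂ → ℂ, (∀ n, Continuous (F n)) ∧
        (∀ n : ℕ+, ∀ z : ℂ, F n (z + 2 * π * ((n : ℕ+) : ℕ)) = F n z) ∧
        ConvBands F f ∧ Equicontinuous F) := by
  have fwd : (Continuous f ∧ LimitPeriodicX f) →
      ∃ F : ℕ+ → ℂ → ℂ, (∀ n, Continuous (F n)) ∧
        (∀ n : ℕ+, ∀ z : ℂ, F n (z + 2 * π * ((n : ℕ+) : ℕ)) = F n z) ∧
        ConvBands F f ∧ Equicontinuous F := by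
    rintro ⟨hf, hlp⟩
    exact ⟨Stmt6.Fap f, fun n => Stmt6.Fap_continuous f hf n, Stmt6.Fap_periodic f,
      Stmt6.Fap_conv f hlp, Stmt6.Fap_equicont f hf hlp⟩
  have rev : (∃ F : ℕ+ → ℂ → ℂ, (∀ n, Continuous (F n)) ∧
      (∀ n : ℕ+, ∀ z : ℂ, F n (z + 2 * π * ((n : ℕ+) : ℕ)) = F n z) ∧
      ConvBands F f) → Continuous f ∧ LimitPeriodicX f := by
    rintro ⟨F, hc, hp, hcv⟩
    exact ⟨Stmt6.rev_cont f F hc hcv, Stmt6.rev_lp f F hp hcv⟩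
  refine ⟨⟨fun h => ?_, rev⟩, fwd⟩
  obtain ⟨F, h1, h2, h3, -⟩ := fwd h
  exact ⟨F, h1, h2, h3⟩

end
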